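/- Under the setting of the previous interpolation construction: suppose additionally (A − μ*C)x_a = λ*x_a + r_a and (A − μ*C)x_b = λ*x_b + r_b for a Hermitian pair (A, C), with μ*, λ* real. Then for x̂ = u(θ̂) with θ̂ ∈ [0, θ_b], one has (A − μ*C)x̂ = λ*x̂ + r̂ where ‖r̂‖ ≤ 2‖r_a‖ + ‖r_b‖. -/
import Mathlib


open scoped Matrix

/-- Spectral (ℓ²-operator) norm of a square complex matrix. -/
noncomputable def specNorm {n : Type*} [Fintype n] [DecidableEq n]
    (M : Matrix n n ℂ) : ℝ :=
  ‖Matrix.toEuclideanCLM (𝕜 := ℂ) M‖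

/-- Euclidean norm of a complex vector. -/
noncomputable def vecNorm {n : Type*} [Fintype n] (x : n → ℂ) : ℝ :=
  ‖(EuclideanSpace.equiv n ℂ).symm x‖

/-- A Hermitian matrix is indefinite: its quadratic form takes both
positive and negative values. -/
def IsIndefinite {n : Type*} [Fintype n] (M : Matrix n n ℂ) : Prop :=
  (∃ y : n → ℂ, 0 < (star y ⬝ᵥ M.mulVec y).re) ∧
  (∃ z : n → ℂ, (star z ⬝ᵥ M.mulVec z).re < 0)

/-- `(μ, lam, x)` is a 2D-eigentriplet of the pair `(A, C)`:
`(A - μ C) x = lam x`, `xᴴ C x = 0`, `xᴴ x = 1`. -/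
def Is2DEigentriplet {n : Type*} [Fintype n] (A C : Matrix n n ℂ)
    (μ lam : ℝ) (x : n → ℂ) : Prop :=
  (A - (μ : ℂ) • C).mulVec x = (lam : ℂ) • x ∧
  star x ⬝ᵥ C.mulVec x = 0 ∧ star x ⬝ᵥ x = 1

/-- residual bound for the interpolated vector `x̂ = u(θ̂)`:
if `(A − μ*C)x_a = λ*x_a + r_a` and `(A − μ*C)x_b = λ*x_b + r_b`, then
`(A − μ*C)x̂ = λ*x̂ + r̂` with `‖r̂‖ ≤ 2‖r_a‖ + ‖r_b‖`. -/
theorem stmt14 {n : Type*} [Fintype n] [DecidableEq n]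
    (A C : Matrix n n ℂ) (hA : A.IsHermitian) (hC : C.IsHermitian)
    (μ lam : ℝ)
    (xa xb : n → ℂ)
    (hxa : star xa ⬝ᵥ xa = 1) (hxb : star xb ⬝ᵥ xb = 1)
    (t : ℝ) (ht : (star xa ⬝ᵥ xb) = (t : ℂ))
    (ht0 : 0 ≤ t) (ht1 : t < 1)
    (ra rb : n → ℂ)
    (hra : (A - (μ : ℂ) • C).mulVec xa = (lam : ℂ) • xa + ra)
    (hrb : (A - (μ : ℂ) • C).mulVec xb = (lam : ℂ) • xb + rb)
    (qb : n → ℂ)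
    (hqb : qb = ((Real.sqrt (1 - t ^ 2) : ℂ))⁻¹ • (xb - (t : ℂ) • xa))
    (θhat : ℝ) (hθhat : θhat ∈ Set.Icc 0 (Real.arccos t))
    (xhat : n → ℂ)
    (hxhat : xhat = ((Real.cos θhat : ℂ)) • xa + ((Real.sin θhat : ℂ)) • qb)
    (rhat : n → ℂ)
    (hrhat : rhat = ((Real.cos θhat : ℂ)) • ra +
      ((Real.sin θhat / Real.sqrt (1 - t ^ 2) : ℝ) : ℂ) • (rb - (t : ℂ) • ra)) :
    (A - (μ : ℂ) • C).mulVec xhat = (lam : ℂ) • xhat + rhat ∧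
      vecNorm rhat ≤ 2 * vecNorm ra + vecNorm rb := by
  have hs : 0 < Real.sqrt (1 - t ^ 2) := by
    apply Real.sqrt_pos.mpr; nlinarith
  have hsin : 0 ≤ Real.sin θhat := by
    apply Real.sin_nonneg_of_nonneg_of_le_pi hθhat.1
    exact le_trans hθhat.2 (Real.arccos_le_pi t)
  have hsinle : Real.sin θhat ≤ Real.sqrt (1 - t ^ 2) := by
    have h1 : Real.sin θhat ≤ Real.sin (Real.arccos t) := by
      rcases le_or_gt θhat (Real.pi/2) with h | h
      · rcases le_or_gt (Real.arccos t) (Real.pi/2) with h2 | h2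
        · exact Real.strictMonoOn_sin.monotoneOn ⟨by linarith [hθhat.1, Real.pi_pos], h⟩
            ⟨by linarith [Real.arccos_nonneg t, Real.pi_pos], h2⟩ hθhat.2
        · calc Real.sin θhat ≤ 1 := Real.sin_le_one _
            _ = Real.sin (Real.pi/2) := Real.sin_pi_div_two.symm
            _ ≤ Real.sin (Real.arccos t) := by
                have := Real.arccos_le_pi_div_two (x := t)
                have : Real.arccos t ≤ Real.pi/2 := this.mpr ht0
                linarith
      · exfalso
        have := Real.arccos_le_pi_div_two (x := t)
        have h3 : Real.arccos t ≤ Real.pi/2 := this.mpr ht0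
        linarith [hθhat.2]
    rw [Real.sin_arccos] at h1
    simpa using h1
  have hcos0 : 0 ≤ Real.cos θhat := by
    have h3 : Real.arccos t ≤ Real.pi/2 := (Real.arccos_le_pi_div_two (x := t)).mpr ht0
    exact Real.cos_nonneg_of_mem_Icc ⟨by linarith [hθhat.1, Real.pi_pos], by linarith [hθhat.2]⟩
  have hcos1 : Real.cos θhat ≤ 1 := Real.cos_le_one _
  have hc : 0 ≤ Real.sin θhat / Real.sqrt (1 - t ^ 2) := div_nonneg hsin hs.le
  have hc1 : Real.sin θhat / Real.sqrt (1 - t ^ 2) ≤ 1 := (div_le_one hs).mpr hsinle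
  constructor
  · subst hqb hxhat hrhat
    simp only [Matrix.mulVec_add, Matrix.mulVec_smul, Matrix.mulVec_sub, hra, hrb]
    push_cast
    module
  · have norm_add : ∀ x y : n → ℂ, vecNorm (x + y) ≤ vecNorm x + vecNorm y := by
      intro x y
      simp only [vecNorm, map_add]
      exact norm_add_le _ _
    have norm_smul : ∀ (a : ℂ) (x : n → ℂ), vecNorm (a • x) = ‖a‖ * vecNorm x := by
      intro a x
      simp only [vecNorm, map_smul, norm_smul]
    have norm_sub : ∀ x y : n → ℂ, vecNorm (x - y) ≤ vecNorm x + vecNorm y := by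
      intro x y
      have := norm_add x (-y)
      have hn : vecNorm (-y) = vecNorm y := by
        simpa using norm_smul (-1 : ℂ) y
      simpa [sub_eq_add_neg, hn] using this
    have h0 : ∀ x : n → ℂ, 0 ≤ vecNorm x := fun x => norm_nonneg _
    rw [hrhat]
    calc vecNorm (((Real.cos θhat : ℂ)) • ra +
        ((Real.sin θhat / Real.sqrt (1 - t ^ 2) : ℝ) : ℂ) • (rb - (t : ℂ) • ra))
        ≤ vecNorm (((Real.cos θhat : ℂ)) • ra) +
          vecNorm (((Real.sin θhat / Real.sqrt (1 - t ^ 2) : ℝ) : ℂ) • (rb - (t : ℂ) • ra)) :=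
          norm_add _ _
      _ = Real.cos θhat * vecNorm ra +
          (Real.sin θhat / Real.sqrt (1 - t ^ 2)) * vecNorm (rb - (t : ℂ) • ra) := by
          rw [norm_smul, norm_smul]
          simp only [Complex.norm_real, Real.norm_eq_abs, abs_of_nonneg hcos0, abs_of_nonneg hc]
      _ ≤ 1 * vecNorm ra + 1 * vecNorm (rb - (t : ℂ) • ra) := by
          gcongr <;> [exact h0 _; exact h0 _]
      _ ≤ vecNorm ra + (vecNorm rb + vecNorm ((t : ℂ) • ra)) := by
          have := norm_sub rb ((t : ℂ) • ra)
          linarith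
      _ ≤ 2 * vecNorm ra + vecNorm rb := by
          rw [norm_smul]
          simp only [Complex.norm_real]
          have : |t| * vecNorm ra ≤ 1 * vecNorm ra := by
            gcongr; · exact h0 _
            · rw [abs_of_nonneg ht0]; linarith
          simp only [Complex.norm_real, Real.norm_eq_abs] at this ⊢
          nlinarith [h0 ra, h0 rb]
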